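/- Let n ∈ ℕ, let f : ℝ → ℝ be (n+1)-times continuously differentiable, fix α ∈ ℝ, and define the remainder R_n(α,x) = ∫_α^x f(λ) dλ − Σ_{k=0}^n c_{n,k} (x−α)^{k+1} [f^{(k)}(α) + (−1)^k f^{(k)}(x)]. Then the derivative of R_n with respect to x equals −Σ_{k=0}^n c_{n,k}(k+1)(x−α)^k [f^{(k)}(α) + (−1)^{k+1}·((n+1)/(n−k+1))·f^{(k)}(x)] + c_{n,n}(−1)^{n+1}(x−α)^{n+1} f^{(n+1)}(x). -/

import Mathlib

open Real intervalIntegral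

/-- Spline coefficients `c_{n,k}`. -/
noncomputable def c (n k : ℕ) : ℝ :=
  ((Nat.factorial n : ℝ) / ((Nat.factorial (n - k) : ℝ) * (Nat.factorial (k + 1) : ℝ))) *
    ((Nat.factorial (2 * n + 1 - k) : ℝ) / (2 * (Nat.factorial (2 * n + 1) : ℝ)))

lemma c_zero' (n : ℕ) : c n 0 = 1/2 := by
  have h1 : (Nat.factorial n : ℝ) ≠ 0 := by positivity
  have h2 : (Nat.factorial (2*n+1) : ℝ) ≠ 0 := by positivity
  simp only [c, Nat.sub_zero, Nat.factorial_one]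
  field_simp; ring

lemma c_rec' (n k : ℕ) (hk : k < n) :
    c n k * ((n:ℝ) - k) = c n (k+1) * ((k:ℝ)+2) * (2*(n:ℝ) - k + 1) := by
  have hnk : ((n:ℝ) - k) ≠ 0 := by
    have : (k:ℝ) < (n:ℝ) := by exact_mod_cast hk
    intro h; linarith
  have fa : (Nat.factorial (n-k) : ℝ) = ((n:ℝ)-k) * (Nat.factorial (n-(k+1)) : ℝ) := by
    have h : n - k = (n-(k+1)) + 1 := by omega
    rw [h, Nat.factorial_succ]
    have h' : ((n-(k+1) : ℕ) : ℝ) = (n:ℝ) - k - 1 := by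
      rw [Nat.cast_sub (by omega : k+1 ≤ n)]; push_cast; ring
    rw [Nat.cast_mul, Nat.cast_add, Nat.cast_one, h']; try ring
  have fb : (Nat.factorial (2*n+1-k) : ℝ) = (2*(n:ℝ)-k+1) * (Nat.factorial (2*n+1-(k+1)) : ℝ) := by
    have h : 2*n+1-k = (2*n+1-(k+1)) + 1 := by omega
    rw [h, Nat.factorial_succ]
    have h' : ((2*n+1-(k+1) : ℕ) : ℝ) = 2*(n:ℝ) - k := by
      rw [Nat.cast_sub (by omega : k+1 ≤ 2*n+1)]; push_cast; ring
    rw [Nat.cast_mul, Nat.cast_add, Nat.cast_one, h']; try ring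
  have fc : (Nat.factorial (k+1+1) : ℝ) = ((k:ℝ)+2) * (Nat.factorial (k+1) : ℝ) := by
    rw [Nat.factorial_succ]; push_cast; ring
  have e1 : (Nat.factorial (n - (k+1)) : ℝ) ≠ 0 := by positivity
  have e2 : (Nat.factorial (k+1) : ℝ) ≠ 0 := by positivity
  have e3 : (Nat.factorial (2*n+1) : ℝ) ≠ 0 := by positivity
  rw [c, c, fa, fb, fc]
  field_simp

/-- Auxiliary function used to telescope the sums. -/
noncomputable def FF (n : ℕ) (u : ℝ) (b : ℕ → ℝ) (k : ℕ) : ℝ :=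
  c n k * ((k:ℝ)+1) * (-1)^k * (1 + ((n:ℝ)+1)/((n:ℝ)-(k:ℝ)+1)) * u^k * b k

lemma FF_zero (n : ℕ) (u : ℝ) (b : ℕ → ℝ) : FF n u b 0 = b 0 := by
  have h : ((n:ℝ)+1) ≠ 0 := by positivity
  simp [FF, c_zero', div_self h]
  ring

lemma FF_key (n : ℕ) (u : ℝ) (b : ℕ → ℝ) (k : ℕ) (hk : k < n) :
    c n k * u^(k+1) * ((-1:ℝ)^k * b (k+1)) = -FF n u b (k+1) := by
  have hnk : ((n:ℝ) - k) ≠ 0 := by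
    have : (k:ℝ) < (n:ℝ) := by exact_mod_cast hk
    intro h; linarith
  have hc : c n k = c n (k+1) * ((k:ℝ)+2) * (1 + ((n:ℝ)+1)/((n:ℝ)-(k:ℝ))) := by
    have := c_rec' n k hk
    field_simp
    linear_combination this
  rw [FF, hc]
  push_cast
  have h : (n:ℝ) - (k+1) + 1 = (n:ℝ) - k := by ring
  rw [h]
  ring

lemma sum_eq' (n : ℕ) (u : ℝ) (a b : ℕ → ℝ) :
    -(∑ k ∈ Finset.range (n + 1), c n k * ((k:ℕ) + 1) * u ^ k *
          (a k + (-1 : ℝ) ^ (k + 1) * (((n : ℝ) + 1) / ((n : ℝ) - (k : ℝ) + 1)) * b k)) +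
        c n n * (-1 : ℝ) ^ (n + 1) * u ^ (n + 1) * b (n + 1)
      = b 0 - ∑ k ∈ Finset.range (n + 1),
          (c n k * (((k:ℕ) + 1) * u ^ k) * (a k + (-1 : ℝ) ^ k * b k) +
            c n k * u ^ (k + 1) * ((-1 : ℝ) ^ k * b (k + 1))) := by
  have hL : ∀ k ∈ Finset.range (n+1),
      c n k * ((k:ℕ) + 1) * u ^ k *
          (a k + (-1 : ℝ) ^ (k + 1) * (((n : ℝ) + 1) / ((n : ℝ) - (k : ℝ) + 1)) * b k)
        = (c n k * ((k:ℝ) + 1) * u ^ k * a k + c n k * ((k:ℝ)+1) * u^k * (-1)^k * b k)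
          - FF n u b k := by
    intro k _
    rw [FF]; ring
  have hRt : ∀ k ∈ Finset.range (n+1),
      (c n k * (((k:ℕ) + 1) * u ^ k) * (a k + (-1 : ℝ) ^ k * b k) +
            c n k * u ^ (k + 1) * ((-1 : ℝ) ^ k * b (k + 1)))
      = (c n k * ((k:ℝ) + 1) * u ^ k * a k + c n k * ((k:ℝ)+1) * u^k * (-1)^k * b k)
          + c n k * u ^ (k + 1) * ((-1 : ℝ) ^ k * b (k + 1)) := by
    intro k _; ring
  rw [Finset.sum_congr rfl hL, Finset.sum_congr rfl hRt]
  simp only [Finset.sum_add_distrib, Finset.sum_sub_distrib]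
  have h2 : ∑ k ∈ Finset.range (n+1), c n k * u^(k+1) * ((-1:ℝ)^k * b (k+1))
      = -(∑ k ∈ Finset.range n, FF n u b (k+1)) + c n n * u^(n+1) * ((-1:ℝ)^n * b (n+1)) := by
    rw [Finset.sum_range_succ]
    congr 1
    rw [← Finset.sum_neg_distrib]
    exact Finset.sum_congr rfl fun k hk => FF_key n u b k (Finset.mem_range.mp hk)
  have h3 : ∑ k ∈ Finset.range (n+1), FF n u b k
      = (∑ k ∈ Finset.range n, FF n u b (k+1)) + FF n u b 0 := Finset.sum_range_succ' _ n
  rw [h2, h3, FF_zero]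
  ring

/-- Derivative of the remainder of the two-point spline based integral approximation. -/
theorem spline_remainder_deriv
    (n : ℕ) (f : ℝ → ℝ) (hf : ContDiff ℝ (n + 1) f) (α : ℝ)
    (R : ℝ → ℝ)
    (hR : ∀ x, R x = (∫ l in α..x, f l) -
      ∑ k ∈ Finset.range (n + 1), c n k * (x - α) ^ (k + 1) *
        (iteratedDeriv k f α + (-1 : ℝ) ^ k * iteratedDeriv k f x)) :
    ∀ x : ℝ, HasDerivAt R
      (-(∑ k ∈ Finset.range (n + 1), c n k * (k + 1) * (x - α) ^ k *
          (iteratedDeriv k f α + (-1 : ℝ) ^ (k + 1) *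
            (((n : ℝ) + 1) / ((n : ℝ) - (k : ℝ) + 1)) * iteratedDeriv k f x)) +
        c n n * (-1 : ℝ) ^ (n + 1) * (x - α) ^ (n + 1) * iteratedDeriv (n + 1) f x) x := by
  intro x
  have hcont : Continuous f := hf.continuous
  have hInt : HasDerivAt (fun y => ∫ l in α..y, f l) (f x) x :=
    intervalIntegral.integral_hasDerivAt_right (hcont.intervalIntegrable α x)
      (hcont.stronglyMeasurableAtFilter _ _) hcont.continuousAt
  have hSum : HasDerivAt
      (fun y => ∑ k ∈ Finset.range (n + 1), c n k * (y - α) ^ (k + 1) *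
        (iteratedDeriv k f α + (-1 : ℝ) ^ k * iteratedDeriv k f y))
      (∑ k ∈ Finset.range (n + 1),
        (c n k * (((k:ℕ) + 1) * (x - α) ^ k) *
            (iteratedDeriv k f α + (-1 : ℝ) ^ k * iteratedDeriv k f x) +
          c n k * (x - α) ^ (k + 1) * ((-1 : ℝ) ^ k * iteratedDeriv (k + 1) f x))) x := by
    apply HasDerivAt.fun_sum
    intro k hk
    have hd : HasDerivAt (iteratedDeriv k f) (iteratedDeriv (k + 1) f x) x := by
      have h : Differentiable ℝ (iteratedDeriv k f) := by
        apply hf.differentiable_iteratedDeriv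
        exact_mod_cast Finset.mem_range.mp hk
      rw [iteratedDeriv_succ]
      exact (h x).hasDerivAt
    have h1 : HasDerivAt (fun y : ℝ => c n k * (y - α) ^ (k + 1))
        (c n k * (((k:ℕ) + 1) * (x - α) ^ k)) x := by
      have := (((hasDerivAt_id x).sub_const α).pow (k + 1)).const_mul (c n k)
      simpa using this
    have h2 : HasDerivAt
        (fun y => iteratedDeriv k f α + (-1 : ℝ) ^ k * iteratedDeriv k f y)
        ((-1 : ℝ) ^ k * iteratedDeriv (k + 1) f x) x :=
      (hd.const_mul _).const_add _
    exact h1.mul h2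
  have hRfun : R = fun x => (∫ l in α..x, f l) -
      ∑ k ∈ Finset.range (n + 1), c n k * (x - α) ^ (k + 1) *
        (iteratedDeriv k f α + (-1 : ℝ) ^ k * iteratedDeriv k f x) := funext hR
  rw [hRfun]
  refine (hInt.sub hSum).congr_deriv ?_
  symm
  have := sum_eq' n (x - α) (fun k => iteratedDeriv k f α) (fun k => iteratedDeriv k f x)
  simpa using this
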